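/- Let f be a perfect k-coloring of a finite regular graph of degree r whose quotient matrix has only two eigenvalues r and θ, let g be a perfect 2-coloring of the same graph whose quotient matrix also has only the eigenvalues r and θ, and suppose that the map h(x) = (f(x), g(x)) takes exactly k+1 distinct values. Then h is a perfect (k+1)-coloring whose quotient matrix has only the two eigenvalues r and θ. -/

import Mathlib

/-- The Hamming graph `H(n, α)`: vertices are words of length `n` over `α`,
adjacent iff they differ in exactly one coordinate. -/
def HammingGraph (n : ℕ) (α : Type*) [DecidableEq α] : SimpleGraph (Fin n → α) where
  Adj x y := hammingDist x y = 1
  symm := ⟨fun x y h => by rwa [hammingDist_comm]⟩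
  loopless := ⟨fun x h => by simp only [hammingDist_self] at h; exact absurd h (by omega)⟩

instance {n : ℕ} {α : Type*} [DecidableEq α] : DecidableRel (HammingGraph n α).Adj :=
  fun x y => inferInstanceAs (Decidable (hammingDist x y = 1))

/-- `f` is a perfect coloring of `G` with quotient matrix `S`: every vertex of
color `i` has exactly `S i j` neighbors of color `j`. -/
def IsPerfectColoring {V K : Type*} [Fintype V] [DecidableEq K] (G : SimpleGraph V)
    [DecidableRel G.Adj] (f : V → K) (S : K → K → ℕ) : Prop :=
  ∀ x : V, ∀ j : K, (Finset.univ.filter (fun y => G.Adj x y ∧ f y = j)).card = S (f x) j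

/-- A function on words depends essentially on its `k`-th argument. -/
def EssentialDep {α K : Type*} {n : ℕ} (f : (Fin n → α) → K) (k : Fin n) : Prop :=
  ∃ x y : Fin n → α, (∀ t, t ≠ k → x t = y t) ∧ f x ≠ f y


set_option linter.unusedSectionVars false
set_option maxHeartbeats 1600000

open Finset

section aux
variable {V : Type*} [Fintype V] [DecidableEq V]

noncomputable def chi {K : Type*} [DecidableEq K] (f : V → K) (j : K) : EuclideanSpace ℝ V :=
  WithLp.toLp 2 (fun x => if f x = j then 1 else 0)

lemma chi_apply {K : Type*} [DecidableEq K] (f : V → K) (j : K) (x : V) :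
    chi f j x = if f x = j then 1 else 0 := rfl

lemma sum_chi_apply {K : Type*} [Fintype K] [DecidableEq K] (f : V → K) (c : K → ℝ) (x : V) :
    (∑ j, c j • chi f j) x = c (f x) := by
  have : (∑ j, c j • chi f j) x = ∑ j, c j * chi f j x := by
    rw [WithLp.ofLp_sum, Finset.sum_apply]; simp [PiLp.smul_apply, smul_eq_mul]
  rw [this]
  simp [chi_apply]

lemma chi_linearIndependent {K : Type*} [Fintype K] [DecidableEq K] {f : V → K}
    (hfs : Function.Surjective f) : LinearIndependent ℝ (chi f) := by
  rw [Fintype.linearIndependent_iff]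
  intro c hc j
  obtain ⟨x, hx⟩ := hfs j
  have := congrArg (fun v : EuclideanSpace ℝ V => v x) hc
  simpa [sum_chi_apply, hx] using this

variable (G : SimpleGraph V) [DecidableRel G.Adj]

lemma adj_chi {K : Type*} [Fintype K] [DecidableEq K] {f : V → K} {S : K → K → ℕ}
    (hf : IsPerfectColoring G f S) (j : K) :
    Matrix.toEuclideanLin (G.adjMatrix ℝ) (chi f j) = ∑ j', (S j' j : ℝ) • chi f j' := by
  ext x
  have h1 : Matrix.toEuclideanLin (G.adjMatrix ℝ) (chi f j) x
      = ∑ y ∈ G.neighborFinset x, chi f j y := by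
    simp [Matrix.toEuclideanLin_apply, SimpleGraph.adjMatrix_mulVec_apply]
  rw [h1, sum_chi_apply]
  have h2 : ∑ y ∈ G.neighborFinset x, chi f j y
      = ((G.neighborFinset x).filter (fun y => f y = j)).card := by
    simp [chi_apply, Finset.sum_ite_eq, Finset.sum_boole]
  have h3 : (G.neighborFinset x).filter (fun y => f y = j)
      = Finset.univ.filter (fun y => G.Adj x y ∧ f y = j) := by
    ext y; simp [SimpleGraph.mem_neighborFinset, and_comm, Finset.mem_filter]
  rw [h2, h3, hf x j]


lemma annihilate {K : Type*} [Fintype K] [DecidableEq K] {f : V → K} {S : K → K → ℕ}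
    (hfs : Function.Surjective f) (hf : IsPerfectColoring G f S) {r θ : ℝ}
    (hspec : spectrum ℝ (Matrix.of fun i j : K => (S i j : ℝ)) ⊆ {r, θ})
    {v : EuclideanSpace ℝ V} (hv : v ∈ Submodule.span ℝ (Set.range (chi f))) :
    ((Matrix.toEuclideanLin (G.adjMatrix ℝ)) ∘ₗ (Matrix.toEuclideanLin (G.adjMatrix ℝ))
      - (r + θ) • Matrix.toEuclideanLin (G.adjMatrix ℝ)
      + (r * θ) • (LinearMap.id : EuclideanSpace ℝ V →ₗ[ℝ] EuclideanSpace ℝ V)) v = 0 := by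
  classical
  set M : Matrix K K ℝ := Matrix.of fun i j : K => (S i j : ℝ) with hM
  set T := Matrix.toEuclideanLin (G.adjMatrix ℝ) with hT
  set W := Submodule.span ℝ (Set.range (chi f)) with hW
  have hinv : ∀ u ∈ W, T u ∈ W := by
    intro u hu
    induction hu using Submodule.span_induction with
    | mem u hu =>
        obtain ⟨j, rfl⟩ := hu
        rw [adj_chi G hf j]
        exact Submodule.sum_mem _ fun j' _ =>
          Submodule.smul_mem _ _ (Submodule.subset_span ⟨j', rfl⟩)
    | zero => simp
    | add u w _ _ hu hw => rw [map_add]; exact W.add_mem hu hw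
    | smul c u _ hu => rw [map_smul]; exact W.smul_mem _ hu
  have herm : (G.adjMatrix ℝ).IsHermitian := by
    unfold Matrix.IsHermitian
    ext i j
    simp [Matrix.conjTranspose_apply, SimpleGraph.adj_comm]
  have hsym : LinearMap.IsSymmetric (T.restrict hinv) :=
    (Matrix.isHermitian_iff_isSymmetric.mp herm).restrict_invariant hinv
  set n := Module.finrank ℝ W with hn
  set b := hsym.eigenvectorBasis rfl with hb
  set μ := hsym.eigenvalues (n := n) rfl with hμ
  have heig : ∀ i, T ↑(b i) = (μ i : ℝ) • (↑(b i) : EuclideanSpace ℝ V) := by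
    intro i
    have h := hsym.apply_eigenvectorBasis rfl i
    have h2 := congrArg (Subtype.val) h
    rw [LinearMap.restrict_coe_apply] at h2
    exact h2
  have hmu : ∀ i, μ i = r ∨ μ i = θ := by
    intro i
    have hbW : (↑(b i) : EuclideanSpace ℝ V) ∈ Submodule.span ℝ (Set.range (chi f)) :=
      (b i).2
    obtain ⟨c, hc⟩ := (Submodule.mem_span_range_iff_exists_fun ℝ).mp hbW
    have hc0 : c ≠ 0 := by
      intro h0
      have : (↑(b i) : EuclideanSpace ℝ V) = 0 := by rw [← hc, h0]; simp
      exact (b.toBasis.ne_zero i) (by rwa [b.coe_toBasis, ← Submodule.coe_eq_zero] at *)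
    have h1 : T ↑(b i) = ∑ j', (∑ j, (S j' j : ℝ) * c j) • chi f j' := by
      rw [← hc, map_sum, hT]
      simp_rw [map_smul, adj_chi G hf, Finset.smul_sum, smul_smul]
      rw [Finset.sum_comm]
      simp_rw [← Finset.sum_smul]
      congr 1
      funext j'
      congr 1
      exact Finset.sum_congr rfl fun j _ => mul_comm _ _
    have h2 : T ↑(b i) = ∑ j, (μ i * c j) • chi f j := by
      rw [heig i, ← hc, Finset.smul_sum]
      simp_rw [smul_smul]
    have hcoef : ∀ j', (∑ j, (S j' j : ℝ) * c j) - μ i * c j' = 0 := by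
      have hz : ∑ j', ((∑ j, (S j' j : ℝ) * c j) - μ i * c j') • chi f j' = 0 := by
        simp_rw [sub_smul, Finset.sum_sub_distrib]
        rw [← h1, ← h2]
        exact sub_self _
      exact Fintype.linearIndependent_iff.mp (chi_linearIndependent hfs) _ hz
    have hceq : M.mulVec c = μ i • c := by
      funext j'
      simp only [Matrix.mulVec, dotProduct, Pi.smul_apply, smul_eq_mul]
      simp only [hM, Matrix.of_apply]
      linarith [hcoef j']
    have hmem : μ i ∈ spectrum ℝ M := by
      rw [spectrum.mem_iff]
      intro hu
      have hdet : (algebraMap ℝ (Matrix K K ℝ) (μ i) - M).det ≠ 0 :=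
        isUnit_iff_ne_zero.mp ((Matrix.isUnit_iff_isUnit_det _).mp hu)
      have hzero : (algebraMap ℝ (Matrix K K ℝ) (μ i) - M).mulVec c = 0 := by
        rw [Matrix.sub_mulVec, hceq, Algebra.algebraMap_eq_smul_one,
          Matrix.smul_mulVec, Matrix.one_mulVec]
        simp
      exact hc0 (Matrix.eq_zero_of_mulVec_eq_zero hdet hzero)
    have := hspec hmem
    simpa using this
  have Pb : ∀ i, T (T ↑(b i)) - (r + θ) • T ↑(b i) + (r * θ) • (↑(b i) : EuclideanSpace ℝ V)
      = 0 := by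
    intro i
    rw [heig i, map_smul, heig i, smul_smul, smul_smul]
    rw [← sub_smul, ← add_smul]
    have : μ i * μ i - (r + θ) * μ i + r * θ = 0 := by
      rcases hmu i with h | h <;> rw [h] <;> ring
    rw [this, zero_smul]
  -- now general element
  have hvW : v ∈ W := hv
  have hrepr := Module.Basis.sum_repr b.toBasis ⟨v, hvW⟩
  have hv2 : v = ∑ i, (b.toBasis.repr ⟨v, hvW⟩ i) • (↑(b i) : EuclideanSpace ℝ V) := by
    have h := congrArg (Subtype.val) hrepr
    simp only [Submodule.coe_sum, SetLike.val_smul, b.coe_toBasis] at h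
    exact h.symm
  set P : EuclideanSpace ℝ V →ₗ[ℝ] EuclideanSpace ℝ V :=
    (T ∘ₗ T) - ((r + θ) • T) + ((r * θ) • LinearMap.id) with hP
  show P v = 0
  rw [hv2, map_sum]
  refine Finset.sum_eq_zero fun i _ => ?_
  rw [map_smul]
  have hPb : P ↑(b i) = 0 := by
    have := Pb i
    simpa [hP, LinearMap.add_apply, LinearMap.sub_apply, LinearMap.comp_apply,
      LinearMap.smul_apply, LinearMap.id_apply] using this
  rw [hPb, smul_zero]

end aux

/-- If `f` is a perfect `k`-coloring and `g` a perfect 2-coloring of an `r`-regular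
graph, both with quotient matrices having only the eigenvalues `r` and `θ`, and
`h(x) = (f x, g x)` takes exactly `k+1` values, then `h` is a perfect `(k+1)`-coloring
whose quotient matrix has only the eigenvalues `r` and `θ`. -/
theorem stmt19 {V K : Type*} [Fintype V] [DecidableEq V] [Fintype K] [DecidableEq K]
    (G : SimpleGraph V) [DecidableRel G.Adj] (r : ℕ) (hreg : G.IsRegularOfDegree r)
    (θ : ℝ)
    (f : V → K) (hfs : Function.Surjective f) (S : K → K → ℕ)
    (hf : IsPerfectColoring G f S)
    (hfspec : spectrum ℝ (Matrix.of fun i j : K => (S i j : ℝ)) = {(r : ℝ), θ})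
    (g : V → Fin 2) (hgs : Function.Surjective g) (S₂ : Fin 2 → Fin 2 → ℕ)
    (hg : IsPerfectColoring G g S₂)
    (hgspec : spectrum ℝ (Matrix.of fun i j : Fin 2 => (S₂ i j : ℝ)) = {(r : ℝ), θ})
    (hcard : (Finset.univ.image fun x : V => (f x, g x)).card = Fintype.card K + 1) :
    ∃ S' : ↥(Finset.univ.image fun x : V => (f x, g x))
        → ↥(Finset.univ.image fun x : V => (f x, g x)) → ℕ,
      IsPerfectColoring G
        (fun x => (⟨(f x, g x), Finset.mem_image_of_mem _ (Finset.mem_univ x)⟩ :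
          ↥(Finset.univ.image fun x : V => (f x, g x)))) S' ∧
      spectrum ℝ (Matrix.of fun i j => ((S' i j : ℕ) : ℝ)) ⊆ {(r : ℝ), θ} := by
  classical
  set I : Finset (K × Fin 2) := Finset.univ.image fun x : V => (f x, g x) with hI
  have hmemI : ∀ x : V, (f x, g x) ∈ I := fun x => Finset.mem_image_of_mem _ (Finset.mem_univ x)
  have hex : ∀ p ∈ I, ∃ x : V, f x = p.1 ∧ g x = p.2 := by
    intro p hp
    obtain ⟨x, -, hx⟩ := Finset.mem_image.mp hp
    exact ⟨x, by rw [← hx], by rw [← hx]⟩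
  -- at most one split color
  have hsplit_unique : ∀ j j' : K, j ≠ j' → ((j, 0) ∈ I ∧ (j, 1) ∈ I) →
      ((j', 0) ∈ I ∧ (j', 1) ∈ I) → False := by
    intro j j' hne hj hj'
    have hcard' : I.card = ∑ i : K, (I.filter fun p => p.1 = i).card :=
      Finset.card_eq_sum_card_fiberwise (fun p _ => Finset.mem_univ p.1)
    have hfib1 : ∀ i : K, 1 ≤ (I.filter fun p => p.1 = i).card := by
      intro i
      obtain ⟨x, hx⟩ := hfs i
      refine Finset.card_pos.mpr ⟨(i, g x), ?_⟩
      refine Finset.mem_filter.mpr ⟨?_, rfl⟩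
      rw [← hx]; exact hmemI x
    have hfib2 : ∀ i : K, (i, 0) ∈ I → (i, 1) ∈ I → 2 ≤ (I.filter fun p => p.1 = i).card := by
      intro i h0 h1
      have hsub : ({(i, (0 : Fin 2)), (i, 1)} : Finset (K × Fin 2)) ⊆
          I.filter fun p => p.1 = i := by
        intro p hp
        rcases Finset.mem_insert.mp hp with h | h
        · subst h; exact Finset.mem_filter.mpr ⟨h0, rfl⟩
        · rw [Finset.mem_singleton.mp h]; exact Finset.mem_filter.mpr ⟨h1, rfl⟩
      have h2 : ({(i, (0 : Fin 2)), (i, 1)} : Finset (K × Fin 2)).card = 2 :=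
        Finset.card_pair (by simp)
      exact le_trans (le_of_eq h2.symm) (Finset.card_le_card hsub)
    have hj'mem : j' ∈ Finset.univ.erase j := Finset.mem_erase.mpr ⟨Ne.symm hne, Finset.mem_univ _⟩
    have e1 : ∑ i : K, (I.filter fun p => p.1 = i).card
        = (I.filter fun p => p.1 = j).card + ∑ i ∈ Finset.univ.erase j,
          (I.filter fun p => p.1 = i).card :=
      (Finset.add_sum_erase _ _ (Finset.mem_univ j)).symm
    have e2 : ∑ i ∈ Finset.univ.erase j, (I.filter fun p => p.1 = i).card
        = (I.filter fun p => p.1 = j').card + ∑ i ∈ (Finset.univ.erase j).erase j',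
          (I.filter fun p => p.1 = i).card :=
      (Finset.add_sum_erase _ _ hj'mem).symm
    have e3 : ((Finset.univ.erase j).erase j').card • 1 ≤
        ∑ i ∈ (Finset.univ.erase j).erase j', (I.filter fun p => p.1 = i).card :=
      Finset.card_nsmul_le_sum _ _ _ (fun i _ => hfib1 i)
    have e4 : ((Finset.univ.erase j).erase j').card = Fintype.card K - 2 := by
      rw [Finset.card_erase_of_mem hj'mem, Finset.card_erase_of_mem (Finset.mem_univ j),
        Finset.card_univ]
      omega
    have e5 : 2 ≤ Fintype.card K := by
      have : ({j, j'} : Finset K).card = 2 := Finset.card_pair hne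
      rw [← this, ← Finset.card_univ]
      exact Finset.card_le_card (Finset.subset_univ _)
    have b1 := hfib2 j hj.1 hj.2
    have b2 := hfib2 j' hj'.1 hj'.2
    rw [e4, smul_eq_mul, mul_one] at e3
    omega
  -- monochromatic colors
  have hnos : ∀ (j : K) (b : Fin 2), (j, b) ∈ I → ¬((j, 0) ∈ I ∧ (j, 1) ∈ I) →
      ∀ y : V, f y = j → g y = b := by
    intro j b hjb hns y hy
    by_contra hne
    have hgy : (j, g y) ∈ I := by rw [← hy]; exact hmemI y
    have hcase : ∀ a c : Fin 2, a ≠ c → a = 0 ∧ c = 1 ∨ a = 1 ∧ c = 0 := by decide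
    rcases hcase (g y) b hne with ⟨h1, h2⟩ | ⟨h1, h2⟩
    · exact hns ⟨by rw [← h1]; exact hgy, by rw [← h2]; exact hjb⟩
    · exact hns ⟨by rw [← h2]; exact hjb, by rw [← h1]; exact hgy⟩
  -- neighbor counts
  set N : V → K → Fin 2 → ℕ := fun x j b =>
    (Finset.univ.filter fun y => G.Adj x y ∧ f y = j ∧ g y = b).card with hN
  have hN0 : ∀ (x : V) (j : K) (b : Fin 2), (j, b) ∉ I → N x j b = 0 := by
    intro x j b hnm
    simp only [hN]
    refine Finset.card_eq_zero.mpr (Finset.filter_eq_empty_iff.mpr ?_)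
    rintro y - ⟨-, hfy, hgy⟩
    exact hnm (by rw [← hfy, ← hgy]; exact hmemI y)
  have hNA : ∀ (x : V) (j : K) (b : Fin 2), (j, b) ∈ I → ¬((j, 0) ∈ I ∧ (j, 1) ∈ I) →
      N x j b = S (f x) j := by
    intro x j b hm hns
    simp only [hN]
    rw [← hf x j]
    congr 1
    apply Finset.filter_congr
    rintro y -
    constructor
    · rintro ⟨ha, hb, -⟩; exact ⟨ha, hb⟩
    · rintro ⟨ha, hb⟩; exact ⟨ha, hb, hnos j b hm hns y hb⟩
  have hNB : ∀ (x : V) (b : Fin 2), ∑ j' : K, N x j' b = S₂ (g x) b := by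
    intro x b
    rw [← hg x b]
    have hpart : (Finset.univ.filter fun y => G.Adj x y ∧ g y = b).card
        = ∑ j' : K, ((Finset.univ.filter fun y => G.Adj x y ∧ g y = b).filter
            fun y => f y = j').card :=
      Finset.card_eq_sum_card_fiberwise (fun y _ => Finset.mem_univ (f y))
    rw [hpart]
    refine Finset.sum_congr rfl fun j' _ => ?_
    simp only [hN]
    congr 1
    rw [Finset.filter_filter]
    apply Finset.filter_congr
    rintro y -
    tauto
  -- the quotient matrix
  set S' : ↥I → ↥I → ℕ := fun c c' =>
    if (c'.1.1, 0) ∈ I ∧ (c'.1.1, 1) ∈ I then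
      S₂ c.1.2 c'.1.2 - ∑ j' ∈ Finset.univ.erase c'.1.1,
        (if (j', c'.1.2) ∈ I then S c.1.1 j' else 0)
    else S c.1.1 c'.1.1 with hS'
  -- the key: counts depend only on (f x, g x)
  have hcount : ∀ (x : V) (j : K) (b : Fin 2) (hm : (j, b) ∈ I),
      N x j b = S' ⟨(f x, g x), hmemI x⟩ ⟨(j, b), hm⟩ := by
    intro x j b hm
    simp only [hS']
    by_cases hs : (j, 0) ∈ I ∧ (j, 1) ∈ I
    · rw [if_pos hs]
      have hsum : N x j b + ∑ j' ∈ Finset.univ.erase j, N x j' b = S₂ (g x) b := by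
        rw [← hNB x b]
        exact Finset.add_sum_erase Finset.univ (fun j' => N x j' b) (Finset.mem_univ j)
      have hrest : ∀ j' ∈ Finset.univ.erase j,
          N x j' b = if (j', b) ∈ I then S (f x) j' else 0 := by
        intro j' hj'
        have hne : j' ≠ j := (Finset.mem_erase.mp hj').1
        by_cases hm' : (j', b) ∈ I
        · rw [if_pos hm']
          exact hNA x j' b hm' (fun hsp => hsplit_unique j' j hne hsp hs)
        · rw [if_neg hm']
          exact hN0 x j' b hm'
      rw [Finset.sum_congr rfl hrest] at hsum
      omega
    · rw [if_neg hs]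
      exact hNA x j b hm hs
  -- perfect coloring
  have hperf : IsPerfectColoring G
      (fun x => (⟨(f x, g x), hmemI x⟩ : ↥I)) S' := by
    intro x c'
    obtain ⟨⟨j, b⟩, hm⟩ := c'
    have hfilt : (Finset.univ.filter fun y =>
          G.Adj x y ∧ (⟨(f y, g y), hmemI y⟩ : ↥I) = ⟨(j, b), hm⟩)
        = Finset.univ.filter fun y => G.Adj x y ∧ f y = j ∧ g y = b := by
      apply Finset.filter_congr
      rintro y -
      simp [Subtype.ext_iff, Prod.ext_iff]
    rw [hfilt]
    exact hcount x j b hm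
  refine ⟨S', hperf, ?_⟩
  -- spectral part
  set T := Matrix.toEuclideanLin (G.adjMatrix ℝ) with hT
  set Pm : EuclideanSpace ℝ V →ₗ[ℝ] EuclideanSpace ℝ V :=
    T ∘ₗ T - ((r : ℝ) + θ) • T + ((r : ℝ) * θ) • LinearMap.id with hPm
  have hPf : ∀ v ∈ Submodule.span ℝ (Set.range (chi f)), Pm v = 0 := fun v hv =>
    annihilate G hfs hf hfspec.le hv
  have hPg : ∀ v ∈ Submodule.span ℝ (Set.range (chi g)), Pm v = 0 := fun v hv =>
    annihilate G hgs hg hgspec.le hv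
  set h' : V → ↥I := fun x => ⟨(f x, g x), hmemI x⟩ with hh'
  have hs' : Function.Surjective h' := by
    rintro ⟨p, hp⟩
    obtain ⟨x, h1, h2⟩ := hex p hp
    exact ⟨x, Subtype.ext (by rw [hh']; exact Prod.ext_iff.mpr ⟨h1, h2⟩)⟩
  have hperf' : IsPerfectColoring G h' S' := hperf
  have hPkill : ∀ c : ↥I, Pm (chi h' c) = 0 := by
    intro c
    obtain ⟨⟨j, b⟩, hm⟩ := c
    by_cases hs : (j, 0) ∈ I ∧ (j, 1) ∈ I
    · have hident : chi h' ⟨(j, b), hm⟩ = chi g b - ∑ j' ∈ Finset.univ.erase j,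
          (if (j', b) ∈ I then chi f j' else 0) := by
        ext y
        have hL : chi h' ⟨(j, b), hm⟩ y = if f y = j ∧ g y = b then 1 else 0 := by
          rw [chi_apply]
          congr 1
          simp [hh', Subtype.ext_iff, Prod.ext_iff]
        have hR : (chi g b - ∑ j' ∈ Finset.univ.erase j,
            (if (j', b) ∈ I then chi f j' else 0)) y
            = chi g b y - ∑ j' ∈ Finset.univ.erase j,
              (if (j', b) ∈ I then chi f j' y else 0) := by
          rw [PiLp.sub_apply]
          congr 1
          rw [WithLp.ofLp_sum, Finset.sum_apply]
          exact Finset.sum_congr rfl fun j' _ => by split_ifs <;> rfl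
        rw [hL, hR]
        have hterm : ∀ j' ∈ Finset.univ.erase j,
            (if (j', b) ∈ I then chi f j' y else 0)
            = if j' = f y then (if (j', b) ∈ I then (1 : ℝ) else 0) else 0 := by
          intro j' _
          by_cases h1 : (j', b) ∈ I <;> by_cases h2 : j' = f y <;>
            simp [h1, h2, chi_apply, eq_comm]
        rw [Finset.sum_congr rfl hterm, Finset.sum_ite_eq' (Finset.univ.erase j) (f y)
          (fun j' => if (j', b) ∈ I then (1 : ℝ) else 0)]
        by_cases hfy : f y = j
        · have : f y ∉ Finset.univ.erase j := by simp [hfy]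
          rw [if_neg this, sub_zero, chi_apply]
          by_cases hgy : g y = b <;> simp [hfy, hgy]
        · have hmem' : f y ∈ Finset.univ.erase j := Finset.mem_erase.mpr ⟨hfy, Finset.mem_univ _⟩
          rw [if_pos hmem', chi_apply]
          by_cases hgy : g y = b
          · have : (f y, b) ∈ I := by rw [← hgy]; exact hmemI y
            simp [hfy, hgy, this]
          · have hni : (f y, b) ∉ I := by
              intro hmem''
              have hnsfy : ¬((f y, 0) ∈ I ∧ (f y, 1) ∈ I) :=
                fun hsp => hsplit_unique (f y) j hfy hsp hs
              exact hgy (hnos (f y) b hmem'' hnsfy y rfl)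
            simp [hfy, hgy, hni]
      rw [hident, map_sub, map_sum,
        Finset.sum_eq_zero (fun j' (_ : j' ∈ Finset.univ.erase j) => by
          split_ifs with h1
          · exact hPf _ (Submodule.subset_span ⟨j', rfl⟩)
          · exact map_zero Pm),
        hPg _ (Submodule.subset_span ⟨b, rfl⟩), sub_zero]
    · have hident : chi h' ⟨(j, b), hm⟩ = chi f j := by
        ext y
        rw [chi_apply, chi_apply]
        by_cases hfy : f y = j
        · have hgy : g y = b := hnos j b hm hs y hfy
          have : h' y = ⟨(j, b), hm⟩ := Subtype.ext (by rw [hh']; exact Prod.ext_iff.mpr ⟨hfy, hgy⟩)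
          simp [this, hfy]
        · have : h' y ≠ ⟨(j, b), hm⟩ := by
            intro hcon
            apply hfy
            have := congrArg (fun c : ↥I => c.1.1) hcon
            simpa [hh'] using this
          simp [this, hfy]
      rw [hident]
      exact hPf _ (Submodule.subset_span ⟨j, rfl⟩)
  -- matrix identity
  set M' : Matrix ↥I ↥I ℝ := Matrix.of fun c c' : ↥I => ((S' c c' : ℕ) : ℝ) with hM'
  have hTc : ∀ c : ↥I, T (chi h' c) = ∑ c' : ↥I, (M' c' c) • chi h' c' := by
    intro c
    rw [hT, adj_chi G hperf' c]
    rfl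
  have hQ : M' * M' - ((r : ℝ) + θ) • M' + ((r : ℝ) * θ) • 1 = 0 := by
    ext c'' c
    have e1 : T (T (chi h' c)) = ∑ c'' : ↥I, (∑ c' : ↥I, M' c'' c' * M' c' c) • chi h' c'' := by
      rw [hTc c, map_sum]
      simp_rw [map_smul, hTc, Finset.smul_sum, smul_smul]
      rw [Finset.sum_comm]
      simp_rw [← Finset.sum_smul]
      exact Finset.sum_congr rfl fun c'' _ => by
        congr 1
        exact Finset.sum_congr rfl fun c' _ => mul_comm _ _
    have e2 : ∑ cc : ↥I, ((∑ c' : ↥I, M' cc c' * M' c' c) - ((r : ℝ) + θ) * M' cc c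
        + ((r : ℝ) * θ) * (if cc = c then 1 else 0)) • chi h' cc = 0 := by
      simp_rw [add_smul, sub_smul, Finset.sum_add_distrib, Finset.sum_sub_distrib]
      rw [← e1]
      have e3 : ∑ cc : ↥I, (((r : ℝ) + θ) * M' cc c) • chi h' cc
          = ((r : ℝ) + θ) • T (chi h' c) := by
        rw [hTc c, Finset.smul_sum]
        exact Finset.sum_congr rfl fun cc _ => by rw [smul_smul]
      have e4 : ∑ cc : ↥I, (((r : ℝ) * θ) * (if cc = c then 1 else 0)) • chi h' cc
          = ((r : ℝ) * θ) • chi h' c := by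
        rw [Finset.sum_congr rfl (fun cc _ => by
          rw [mul_ite, mul_one, mul_zero, ite_smul, zero_smul] : ∀ cc ∈ Finset.univ,
            (((r : ℝ) * θ) * (if cc = c then 1 else 0)) • chi h' cc
            = if cc = c then ((r : ℝ) * θ) • chi h' cc else 0)]
        rw [Finset.sum_ite_eq' Finset.univ c (fun cc => ((r : ℝ) * θ) • chi h' cc),
          if_pos (Finset.mem_univ c)]
      rw [e3, e4]
      have := hPkill c
      rw [hPm] at this
      simpa [LinearMap.add_apply, LinearMap.sub_apply, LinearMap.comp_apply,
        LinearMap.smul_apply, LinearMap.id_apply] using this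
    have hcoef := Fintype.linearIndependent_iff.mp (chi_linearIndependent hs') _ e2 c''
    simp only [Matrix.add_apply, Matrix.sub_apply, Matrix.smul_apply, Matrix.mul_apply,
      Matrix.one_apply, Matrix.zero_apply, smul_eq_mul]
    simpa using hcoef
  -- spectrum inclusion
  intro μ hμ
  by_contra hne
  simp only [Set.mem_insert_iff, Set.mem_singleton_iff] at hne
  push_neg at hne
  rw [spectrum.mem_iff] at hμ
  apply hμ
  have hsq : M' * M' = ((r : ℝ) + θ) • M' - ((r : ℝ) * θ) • 1 := by
    rw [sub_add_eq_add_sub, sub_eq_zero] at hQ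
    rw [eq_sub_iff_add_eq]
    exact hQ
  have key : (algebraMap ℝ (Matrix ↥I ↥I ℝ) μ - M') * (M' - ((r : ℝ) + θ - μ) • 1)
      = ((μ - r) * (μ - θ)) • 1 := by
    rw [Algebra.algebraMap_eq_smul_one, sub_mul, mul_sub, mul_sub, smul_mul_assoc,
      smul_mul_assoc, one_mul, mul_smul_comm, mul_one, mul_smul_comm, mul_one, hsq]
    module
  show IsUnit (algebraMap ℝ (Matrix ↥I ↥I ℝ) μ - M')
  rw [Matrix.isUnit_iff_isUnit_det, isUnit_iff_ne_zero]
  intro hdet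
  have hd := congrArg Matrix.det key
  rw [Matrix.det_mul, hdet, zero_mul, Matrix.det_smul, Matrix.det_one, mul_one] at hd
  exact (pow_ne_zero _ (mul_ne_zero (sub_ne_zero.mpr hne.1) (sub_ne_zero.mpr hne.2))) hd.symm
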